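/- Let n ∈ ℝ³ be a unit vector, R = 2nnᵀ − I₃, and r_n(x) = x − 2⟨n,x⟩n. Let b : S² → ℝ^m be continuous with all components odd (b(−x) = −b(x)), and suppose there is a matrix M ∈ ℝ^{m×m} with b(Rx) = M b(x) for all x ∈ S². Then the matrix H = ∫_{{x ∈ S² : ⟨n,x⟩ < 0}} b(x) (b(x) − ρ b(r_n(x)))ᵀ dσ(x) factorizes as H = G (I_m + ρ Mᵀ), where G = ∫_{{x ∈ S² : ⟨n,x⟩ < 0}} b(x) b(x)ᵀ dσ(x) and ρ ∈ ℝ is arbitrary. -/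
import Mathlib


open MeasureTheory Metric
open scoped RealInnerProductSpace Real Matrix

noncomputable section

/-- Euclidean space `ℝ³`. -/
abbrev E3 : Type := EuclideanSpace ℝ (Fin 3)

/-- The unit sphere `S² ⊆ ℝ³`. -/
abbrev S2 : Type := Metric.sphere (0 : E3) 1

/-- The rotation-invariant surface measure `σ` on `S²` (total mass `4π`). -/
noncomputable def σS : Measure S2 := (volume : Measure E3).toSphere

/-- Factorization of the Marshak boundary matrix: with `R = 2nnᵀ − I₃` (acting as
`x ↦ 2⟨n,x⟩n − x`), `r_n(x) = x − 2⟨n,x⟩n = −Rx`, `b : S² → ℝ^m` continuous with odd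
components and `b(Rx) = M b(x)` on `S²`, the matrix
`H = ∫_{⟨n,x⟩<0} b(x)(b(x) − ρ b(r_n(x)))ᵀ dσ` equals `G (I + ρ Mᵀ)` where
`G = ∫_{⟨n,x⟩<0} b(x) b(x)ᵀ dσ`. -/
theorem marshak_matrix_factorization {m : ℕ} (n : E3) (hn : ‖n‖ = 1) (ρ : ℝ)
    (b : E3 → Fin m → ℝ)
    (hbcont : Continuous (fun x : S2 => b (x : E3)))
    (hbodd : ∀ x : E3, x ∈ Metric.sphere (0 : E3) 1 → b (-x) = -b x)
    (M : Matrix (Fin m) (Fin m) ℝ)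
    (hM : ∀ x : E3, x ∈ Metric.sphere (0 : E3) 1 →
      b ((2 * ⟪n, x⟫) • n - x) = M *ᵥ b x)
    (H G : Matrix (Fin m) (Fin m) ℝ)
    (hH : ∀ i j, H i j = ∫ x in {x : S2 | ⟪n, (x : E3)⟫ < 0},
      b (x : E3) i * (b (x : E3) j - ρ * b ((x : E3) - (2 * ⟪n, (x : E3)⟫) • n) j) ∂σS)
    (hG : ∀ i j, G i j = ∫ x in {x : S2 | ⟪n, (x : E3)⟫ < 0},
      b (x : E3) i * b (x : E3) j ∂σS) :
    H = G * (1 + ρ • Mᵀ) := by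
  -- key pointwise identity
  have key : ∀ x : E3, x ∈ Metric.sphere (0 : E3) 1 →
      b (x - (2 * ⟪n, x⟫) • n) = -(M *ᵥ b x) := by
    intro x hx
    have hx1 : ‖x‖ = 1 := by simpa using hx
    have hRx : ((2 * ⟪n, x⟫) • n - x) ∈ Metric.sphere (0 : E3) 1 := by
      have : ‖(2 * ⟪n, x⟫) • n - x‖ ^ 2 = 1 := by
        rw [@norm_sub_sq_real]
        rw [norm_smul, real_inner_smul_left, hn, hx1]
        simp [abs_mul]
        ring_nf
        rw [sq_abs]
        ring
      simp only [mem_sphere_iff_norm, sub_zero]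
      nlinarith [norm_nonneg ((2 * ⟪n, x⟫) • n - x)]
    have heq : x - (2 * ⟪n, x⟫) • n = -((2 * ⟪n, x⟫) • n - x) := by abel
    rw [heq, hbodd _ hRx, hM _ hx]
  -- integrability
  have hmeas : MeasurableSet {x : S2 | ⟪n, (x : E3)⟫ < 0} := by
    apply measurableSet_lt
    · exact (continuous_const.inner continuous_subtype_val).measurable
    · exact measurable_const
  have hint : ∀ i k : Fin m,
      Integrable (fun x : S2 => b (x : E3) i * b (x : E3) k)
        (σS.restrict {x : S2 | ⟪n, (x : E3)⟫ < 0}) := by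
    intro i k
    have hc : Continuous (fun x : S2 => b (x : E3) i * b (x : E3) k) :=
      ((continuous_apply i).comp hbcont).mul ((continuous_apply k).comp hbcont)
    haveI : IsFiniteMeasure σS := by unfold σS; infer_instance
    exact (hc.integrable_of_hasCompactSupport
      (HasCompactSupport.of_compactSpace _)).restrict
  ext i j
  rw [hH]
  have hcongr : ∀ x ∈ {x : S2 | ⟪n, (x : E3)⟫ < 0},
      b (x : E3) i * (b (x : E3) j - ρ * b ((x : E3) - (2 * ⟪n, (x : E3)⟫) • n) j)
      = b (x : E3) i * b (x : E3) j
        + ρ * ∑ k, M j k * (b (x : E3) i * b (x : E3) k) := by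
    intro x _
    rw [key _ x.2]
    simp only [Pi.neg_apply, Matrix.mulVec, dotProduct, mul_neg,
      sub_neg_eq_add, mul_add]
    congr 1
    rw [Finset.mul_sum, Finset.mul_sum, Finset.mul_sum]
    exact Finset.sum_congr rfl fun k _ => by ring
  rw [setIntegral_congr_fun hmeas hcongr]
  rw [integral_add (hint i j)]
  · rw [integral_const_mul, integral_finset_sum]
    · have : (G * (1 + ρ • Mᵀ)) i j
          = G i j + ρ * ∑ k, M j k * G i k := by
        simp only [Matrix.mul_apply, Matrix.add_apply, Matrix.smul_apply,
          Matrix.one_apply, Matrix.transpose_apply, smul_eq_mul, mul_add,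
          Finset.sum_add_distrib, mul_ite, mul_one, mul_zero,
          Finset.sum_ite_eq', Finset.mem_univ, if_true, Finset.mul_sum]
        congr 1
        exact Finset.sum_congr rfl fun k _ => by ring
      rw [this, hG]
      congr 1
      congr 1
      apply Finset.sum_congr rfl
      intro k _
      rw [integral_const_mul, hG]
    · intro k _
      exact ((hint i k).const_mul _)
  · apply Integrable.const_mul
    apply integrable_finset_sum
    intro k _
    exact ((hint i k).const_mul _)
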